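/- arXiv:quant-ph/0412187 — 2 statements merged into one kernel-verified Lean document; each statement's English description precedes it below -/
import Mathlib

section
/- Let n ≥ 1 be an integer and let s be an integer with 1 ≤ s < 2^(n-1). Then there exists an integer i with −n ≤ i ≤ n such that, setting r = 2^i, the overlap (s + r·(2^n − 2s)/√2) / √(2·(s² + r²·(2^n − 2s)²/2)) is at least (1 + √2)/√6. -/
/-- Key algebraic inequality: if `1 ≤ s` and `s ≤ b ≤ 2s`, then the overlap is large. -/
lemma overlap_key (s b : ℝ) (hs : 1 ≤ s) (hb1 : s ≤ b) (hb2 : b ≤ 2 * s) :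
    (s + b / Real.sqrt 2) / Real.sqrt (2 * s ^ 2 + b ^ 2) ≥ (1 + Real.sqrt 2) / Real.sqrt 6 := by
  have hw : Real.sqrt 2 > 0 := by positivity
  have hw2 : Real.sqrt 2 ^ 2 = 2 := Real.sq_sqrt (by norm_num)
  have h6 : Real.sqrt 6 > 0 := by positivity
  have h62 : Real.sqrt 6 ^ 2 = 6 := Real.sq_sqrt (by norm_num)
  have hD : (0:ℝ) < 2 * s ^ 2 + b ^ 2 := by nlinarith
  have hDs : Real.sqrt (2 * s ^ 2 + b ^ 2) > 0 := Real.sqrt_pos.mpr hD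
  have hDs2 : Real.sqrt (2 * s ^ 2 + b ^ 2) ^ 2 = 2 * s ^ 2 + b ^ 2 := Real.sq_sqrt hD.le
  rw [ge_iff_le, div_le_div_iff₀ h6 hDs]
  have hbpos : 0 < b := lt_of_lt_of_le (by linarith) hb1
  apply le_of_pow_le_pow_left₀ (n := 2) (by norm_num) (by positivity)
  have hkey : (b - s) * (2 * s - b) ≥ 0 := by nlinarith
  have hexp : (s + b / Real.sqrt 2) ^ 2 = s ^ 2 + Real.sqrt 2 * s * b + b ^ 2 / 2 := by
    field_simp
    linear_combination (-(2 * Real.sqrt 2 * s * b + b ^ 2)) * hw2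
  rw [mul_pow, mul_pow, hexp, hDs2, h62]
  nlinarith [mul_nonneg hw.le hkey, hw2, sq_nonneg (b - s), sq_nonneg b]

/-- For `1 ≤ s < 2^(n-1)`, some dyadic ratio `r = 2^i` with `-n ≤ i ≤ n` brings the
vector `(s, r·(2^n − 2s)/√2)` within overlap `(1+√2)/√6` of `|+⟩`. -/
theorem stmt_0 (n : ℕ) (hn : 1 ≤ n) (s : ℤ) (hs1 : 1 ≤ s) (hs2 : s < 2 ^ (n - 1)) :
    ∃ i : ℤ, -(n : ℤ) ≤ i ∧ i ≤ (n : ℤ) ∧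
      ((s : ℝ) + (2 : ℝ) ^ i * ((2 ^ n - 2 * (s : ℝ)) / Real.sqrt 2)) /
          Real.sqrt (2 * ((s : ℝ) ^ 2 + ((2 : ℝ) ^ i) ^ 2 * (2 ^ n - 2 * (s : ℝ)) ^ 2 / 2)) ≥
        (1 + Real.sqrt 2) / Real.sqrt 6 := by
  have hn2 : 2 ≤ n := by
    rcases Nat.lt_or_ge n 2 with h | h
    · interval_cases n <;> simp_all <;> omega
    · exact h
  set t : ℝ := 2 ^ n - 2 * (s : ℝ) with ht
  have hsR : (1:ℝ) ≤ (s:ℝ) := by exact_mod_cast hs1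
  have hs2R : (s : ℝ) < 2 ^ (n - 1) := by exact_mod_cast hs2
  have hpow : (2:ℝ) ^ n = 2 * 2 ^ (n - 1) := by
    rw [← pow_succ']
    congr 1
    omega
  have htpos : 0 < t := by rw [ht, hpow]; linarith
  have ht2 : 2 ≤ t := by
    have hZ : s ≤ 2 ^ (n-1) - 1 := by omega
    have hR : (s:ℝ) ≤ 2 ^ (n-1) - 1 := by exact_mod_cast hZ
    rw [ht, hpow]; linarith
  set q : ℝ := (s : ℝ) / t with hq
  have hqpos : 0 < q := by positivity
  set i : ℤ := Int.log 2 q + 1 with hi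
  have hspos : (0:ℝ) < s := by linarith
  -- bounds relating 2^i and q
  have hlt : q < (2:ℝ) ^ i := Int.lt_zpow_succ_log_self (by norm_num) q
  have hle : (2:ℝ) ^ i ≤ 2 * q := by
    have h1 : (2:ℝ) ^ (Int.log 2 q) ≤ q := Int.zpow_log_le_self (by norm_num) hqpos
    rw [hi, zpow_add_one₀ (by norm_num : (2:ℝ) ≠ 0)]
    linarith
  set b : ℝ := (2:ℝ) ^ i * t with hb
  have hb1 : (s:ℝ) ≤ b := by
    have := (div_lt_iff₀ htpos).mp hlt
    rw [hb]; linarith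
  have hb2 : b ≤ 2 * (s:ℝ) := by
    have h2 : (2:ℝ)^i * t ≤ (2 * q) * t := by
      exact mul_le_mul_of_nonneg_right hle htpos.le
    rw [hb]
    have : (2 * q) * t = 2 * s := by
      rw [hq]; field_simp
    linarith [h2.trans_eq this]
  refine ⟨i, ?_, ?_, ?_⟩
  · -- lower bound on i
    have hqlb : (2:ℝ) ^ (-(n:ℤ)) ≤ q := by
      have h2 : t ≤ (2:ℝ) ^ (n:ℤ) := by
        rw [zpow_natCast, ht]; linarith
      rw [hq, le_div_iff₀ htpos]
      have h3 : (2:ℝ)^(-(n:ℤ)) * t ≤ (2:ℝ)^(-(n:ℤ)) * 2^(n:ℤ) :=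
        mul_le_mul_of_nonneg_left h2 (by positivity)
      have h4 : (2:ℝ)^(-(n:ℤ)) * 2^(n:ℤ) = 1 := by
        rw [← zpow_add₀ (by norm_num : (2:ℝ) ≠ 0)]; norm_num
      linarith
    have := Int.log_mono_right (b := 2) (by positivity : (0:ℝ) < (2:ℝ)^(-(n:ℤ))) hqlb
    have h5 : Int.log 2 ((2:ℝ)^(-(n:ℤ))) = -(n:ℤ) := by
      rw [show (2:ℝ) = ((2:ℕ):ℝ) by norm_num]
      exact Int.log_zpow (by norm_num) _
    rw [h5] at this
    omega
  · -- upper bound on i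
    have hqub : q ≤ (2:ℝ) ^ ((n:ℤ) - 2) := by
      have h1 : q ≤ (s:ℝ) / 2 := by
        rw [hq]
        apply div_le_div_of_nonneg_left hspos.le (by norm_num) ht2
      have h2 : (2:ℝ) ^ ((n:ℤ) - 2) = 2 ^ (n - 1) / 2 := by
        have : ((n:ℤ) - 2) = ((n - 1 : ℕ) : ℤ) - 1 := by omega
        rw [this, zpow_sub₀ (by norm_num : (2:ℝ) ≠ 0), zpow_natCast, zpow_one]
      rw [h2]; linarith
    have := Int.log_mono_right (b := 2) hqpos hqub
    have h5 : Int.log 2 ((2:ℝ)^((n:ℤ)-2)) = (n:ℤ)-2 := by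
      rw [show (2:ℝ) = ((2:ℕ):ℝ) by norm_num]
      exact Int.log_zpow (by norm_num) _
    rw [h5] at this
    omega
  · -- the overlap inequality
    have e1 : (2:ℝ) ^ i * (t / Real.sqrt 2) = b / Real.sqrt 2 := by
      rw [hb]; ring
    have e2 : 2 * ((s:ℝ) ^ 2 + ((2:ℝ) ^ i) ^ 2 * t ^ 2 / 2) = 2 * (s:ℝ) ^ 2 + b ^ 2 := by
      rw [hb]; ring
    rw [e1, e2]
    exact overlap_key _ _ hsR hb1 hb2
end

section
/- Define f(t) = (1 + t)/√(2(1 + t²)) for real t. If t is a real number with 1/2 ≤ t ≤ 1 (equivalently, t and 2t lie on opposite sides of 1), then max(f(t), f(2t)) ≥ (1 + √2)/√6, with equality exactly when t = 1/√2. -/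
lemma sqrt_aux (u : ℝ) (hu : (0:ℝ) < u) :
    ((1 + Real.sqrt 2) / Real.sqrt 6 ≤ (1 + u) / Real.sqrt (2 * (1 + u ^ 2)) ↔
      Real.sqrt 2 * (1 + u ^ 2) ≤ 3 * u) ∧
    ((1 + u) / Real.sqrt (2 * (1 + u ^ 2)) = (1 + Real.sqrt 2) / Real.sqrt 6 ↔
      Real.sqrt 2 * (1 + u ^ 2) = 3 * u) := by
  have hs2 : Real.sqrt 2 ^ 2 = 2 := Real.sq_sqrt (by norm_num)
  have hs6 : Real.sqrt 6 ^ 2 = 6 := Real.sq_sqrt (by norm_num)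
  have hs2p : 0 < Real.sqrt 2 := Real.sqrt_pos.mpr (by norm_num)
  have hs6p : 0 < Real.sqrt 6 := Real.sqrt_pos.mpr (by norm_num)
  have hBp : 0 < Real.sqrt (2 * (1 + u ^ 2)) := Real.sqrt_pos.mpr (by positivity)
  have hB : Real.sqrt (2 * (1 + u ^ 2)) ^ 2 = 2 * (1 + u ^ 2) :=
    Real.sq_sqrt (by positivity)
  set s2 := Real.sqrt 2
  set s6 := Real.sqrt 6
  set B := Real.sqrt (2 * (1 + u ^ 2))
  have hkey : ((1 + u) * s6) ^ 2 - ((1 + s2) * B) ^ 2 = 4 * (3 * u - s2 * (1 + u ^ 2)) := by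
    have h : (1 + s2) ^ 2 = 3 + 2 * s2 := by nlinarith [hs2]
    nlinarith [hs2, hs6, hB, h]
  have hap : 0 < (1 + s2) * B := by positivity
  have hbp : 0 < (1 + u) * s6 := by positivity
  constructor
  · rw [div_le_div_iff₀ hs6p hBp]
    constructor
    · intro h
      nlinarith [hkey, hap, hbp]
    · intro h
      nlinarith [hkey, hap, hbp]
  · rw [div_eq_div_iff hBp.ne' hs6p.ne']
    constructor
    · intro h
      nlinarith [hkey]
    · intro h
      nlinarith [hkey, hap, hbp]

/-- For `f(t) = (1+t)/√(2(1+t²))` and `1/2 ≤ t ≤ 1`, the larger of `f(t)` and `f(2t)`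
is at least `(1+√2)/√6`, with equality exactly when `t = 1/√2`. -/
theorem stmt_2 (f : ℝ → ℝ) (hf : ∀ t : ℝ, f t = (1 + t) / Real.sqrt (2 * (1 + t ^ 2)))
    (t : ℝ) (ht1 : 1 / 2 ≤ t) (ht2 : t ≤ 1) :
    (1 + Real.sqrt 2) / Real.sqrt 6 ≤ max (f t) (f (2 * t)) ∧
    (max (f t) (f (2 * t)) = (1 + Real.sqrt 2) / Real.sqrt 6 ↔ t = 1 / Real.sqrt 2) := by
  have hs2 : Real.sqrt 2 ^ 2 = 2 := Real.sq_sqrt (by norm_num)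
  have hs2p : 0 < Real.sqrt 2 := Real.sqrt_pos.mpr (by norm_num)
  have hs2gt1 : 1 < Real.sqrt 2 := by nlinarith [hs2, hs2p]
  have htp : (0:ℝ) < t := by linarith
  have h2tp : (0:ℝ) < 2 * t := by linarith
  have K1 := sqrt_aux t htp
  have K2 := sqrt_aux (2 * t) h2tp
  rw [hf t, hf (2 * t)]
  rcases le_total (Real.sqrt 2 * t) 1 with hc | hc
  · -- t ≤ 1/√2, use f(2t)
    have hfac1 : (0:ℝ) ≤ 2 * Real.sqrt 2 * t - 1 := by nlinarith
    have hfac2 : (0:ℝ) ≤ Real.sqrt 2 - 2 * t := by nlinarith [hs2]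
    have h2t : Real.sqrt 2 * (1 + (2 * t) ^ 2) ≤ 3 * (2 * t) := by
      nlinarith [hs2, mul_nonneg hfac1 hfac2]
    have hge : (1 + Real.sqrt 2) / Real.sqrt 6 ≤ (1 + 2 * t) / Real.sqrt (2 * (1 + (2 * t) ^ 2)) :=
      K2.1.mpr h2t
    have hmax : (1 + Real.sqrt 2) / Real.sqrt 6 ≤ max ((1 + t) / Real.sqrt (2 * (1 + t ^ 2))) ((1 + 2 * t) / Real.sqrt (2 * (1 + (2 * t) ^ 2))) :=
      le_trans hge (le_max_right _ _)
    refine ⟨hmax, ?_, ?_⟩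
    · intro h
      have hle : (1 + 2 * t) / Real.sqrt (2 * (1 + (2 * t) ^ 2)) ≤ (1 + Real.sqrt 2) / Real.sqrt 6 := by
        rw [← h]; exact le_max_right _ _
      have heq : (1 + 2 * t) / Real.sqrt (2 * (1 + (2 * t) ^ 2)) = (1 + Real.sqrt 2) / Real.sqrt 6 :=
        le_antisymm hle hge
      have heq2 := K2.2.mp heq
      have h2t2 : 2 * t = Real.sqrt 2 := by nlinarith [hs2, hs2gt1, heq2]
      rw [eq_div_iff hs2p.ne']
      linear_combination (Real.sqrt 2 / 2) * h2t2 + (1 / 2) * hs2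
    · intro h
      rw [h]
      have hsq : (1 / Real.sqrt 2) ^ 2 = 1 / 2 := by
        rw [div_pow, one_pow, hs2]
      have heq1 : Real.sqrt 2 * (1 + (1 / Real.sqrt 2) ^ 2) = 3 * (1 / Real.sqrt 2) := by
        rw [hsq, mul_one_div, eq_div_iff hs2p.ne']
        linear_combination (3 / 2) * hs2
      have heq2 : Real.sqrt 2 * (1 + (2 * (1 / Real.sqrt 2)) ^ 2) = 3 * (2 * (1 / Real.sqrt 2)) := by
        field_simp
        linarith [hs2]
      have e1 := (sqrt_aux (1 / Real.sqrt 2) (by positivity)).2.mpr heq1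
      have e2 := (sqrt_aux (2 * (1 / Real.sqrt 2)) (by positivity)).2.mpr heq2
      rw [e1, e2, max_self]
  · -- 1/√2 ≤ t, use f(t)
    have hfac1 : (0:ℝ) ≤ Real.sqrt 2 * t - 1 := by nlinarith
    have hfac2 : (0:ℝ) ≤ Real.sqrt 2 - t := by nlinarith
    have h1t : Real.sqrt 2 * (1 + t ^ 2) ≤ 3 * t := by
      nlinarith [hs2, mul_nonneg hfac1 hfac2]
    have hge : (1 + Real.sqrt 2) / Real.sqrt 6 ≤ (1 + t) / Real.sqrt (2 * (1 + t ^ 2)) :=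
      K1.1.mpr h1t
    have hmax : (1 + Real.sqrt 2) / Real.sqrt 6 ≤ max ((1 + t) / Real.sqrt (2 * (1 + t ^ 2))) ((1 + 2 * t) / Real.sqrt (2 * (1 + (2 * t) ^ 2))) :=
      le_trans hge (le_max_left _ _)
    refine ⟨hmax, ?_, ?_⟩
    · intro h
      have hle : (1 + t) / Real.sqrt (2 * (1 + t ^ 2)) ≤ (1 + Real.sqrt 2) / Real.sqrt 6 := by
        rw [← h]; exact le_max_left _ _
      have heq : (1 + t) / Real.sqrt (2 * (1 + t ^ 2)) = (1 + Real.sqrt 2) / Real.sqrt 6 :=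
        le_antisymm hle hge
      have heq1 := K1.2.mp heq
      have h2t2 : Real.sqrt 2 * t = 1 := by nlinarith [hs2, hs2gt1, heq1]
      rw [eq_div_iff hs2p.ne']
      linarith [h2t2]
    · intro h
      rw [h]
      have hsq : (1 / Real.sqrt 2) ^ 2 = 1 / 2 := by
        rw [div_pow, one_pow, hs2]
      have heq1 : Real.sqrt 2 * (1 + (1 / Real.sqrt 2) ^ 2) = 3 * (1 / Real.sqrt 2) := by
        rw [hsq, mul_one_div, eq_div_iff hs2p.ne']
        linear_combination (3 / 2) * hs2
      have heq2 : Real.sqrt 2 * (1 + (2 * (1 / Real.sqrt 2)) ^ 2) = 3 * (2 * (1 / Real.sqrt 2)) := by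
        field_simp
        linarith [hs2]
      have e1 := (sqrt_aux (1 / Real.sqrt 2) (by positivity)).2.mpr heq1
      have e2 := (sqrt_aux (2 * (1 / Real.sqrt 2)) (by positivity)).2.mpr heq2
      rw [e1, e2, max_self]
end
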